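/- Let (G,P) be a quasi-lattice ordered group and let B be a subgroup of G such that for every x, y ∈ B with x ∨ y < ∞ one has x ∨ y ∈ B. Then for every x ∈ B that can be written as x = s·t⁻¹ with s, t ∈ P, there exist μ, ν ∈ B ∩ P such that x = μ·ν⁻¹ and, for all p, q ∈ P with p·q⁻¹ = x, μ ≤ p and ν ≤ q. -/
import Mathlib


/-- The left-invariant relation `x ≤ y ↔ x⁻¹ * y ∈ P` associated to a submonoid `P`. -/
def QLO.le {G : Type*} [Group G] (P : Submonoid G) (x y : G) : Prop := x⁻¹ * y ∈ P

/-- `w` is the least common upper bound of `x` and `y` lying in `P`. -/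
def QLO.IsLub {G : Type*} [Group G] (P : Submonoid G) (x y w : G) : Prop :=
  w ∈ P ∧ QLO.le P x w ∧ QLO.le P y w ∧
    ∀ z ∈ P, QLO.le P x z → QLO.le P y z → QLO.le P w z

/-- `(G, P)` is a quasi-lattice ordered group. -/
def QLO.IsQLO {G : Type*} [Group G] (P : Submonoid G) : Prop :=
  (∀ x : G, x ∈ P → x⁻¹ ∈ P → x = 1) ∧
    ∀ x y : G, (∃ z ∈ P, QLO.le P x z ∧ QLO.le P y z) → ∃ w : G, QLO.IsLub P x y w

theorem stmt3 {G : Type*} [Group G] (P : Submonoid G) (hP : QLO.IsQLO P)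
    (B : Subgroup G)
    -- B is closed under taking least common upper bounds
    (H3 : ∀ x y w : G, x ∈ B → y ∈ B → QLO.IsLub P x y w → w ∈ B) :
    ∀ x ∈ B, ∀ s t : G, s ∈ P → t ∈ P → x = s * t⁻¹ →
      ∃ μ ν : G, μ ∈ B ∧ μ ∈ P ∧ ν ∈ B ∧ ν ∈ P ∧ x = μ * ν⁻¹ ∧
        ∀ p q : G, p ∈ P → q ∈ P → p * q⁻¹ = x → QLO.le P μ p ∧ QLO.le P ν q := by

  intro x hxB s t hs ht hx
  -- s is a common upper bound of x and 1
  have hxs : QLO.le P x s := by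
    have : x⁻¹ * s = t := by rw [hx]; group
    rw [QLO.le, this]; exact ht
  have h1s : QLO.le P (1 : G) s := by simpa [QLO.le] using hs
  obtain ⟨w, hwP, hxw, h1w, hmin⟩ := hP.2 x 1 ⟨s, hs, hxs, h1s⟩
  have hwB : w ∈ B := H3 x 1 w hxB B.one_mem ⟨hwP, hxw, h1w, hmin⟩
  refine ⟨w, x⁻¹ * w, hwB, hwP, B.mul_mem (B.inv_mem hxB) hwB, hxw, by group, ?_⟩
  intro p q hp hq hpq
  have hxp : QLO.le P x p := by
    have : x⁻¹ * p = q := by rw [← hpq]; group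
    rw [QLO.le, this]; exact hq
  have h1p : QLO.le P (1 : G) p := by simpa [QLO.le] using hp
  have hwp : QLO.le P w p := hmin p hp hxp h1p
  constructor
  · exact hwp
  · have : (x⁻¹ * w)⁻¹ * q = w⁻¹ * p := by rw [← hpq]; group
    rw [QLO.le, this]; exact hwp
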